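/- Monotonicity of persistence under the dual filter: let f be a signal over a finite connected graph G = (V,E), let 𝔗₀ be the BHT of (G, f) with respect to a (G,f)-ordering, and let 𝔗₁ be the BHT of (G, −f) with respect to a (G,−f)-ordering. Set g = −𝓛₀^ε(−f) computed via 𝔗₁. Then there exists a BHT 𝔗₀′ of (G, g) such that pers_{𝔗₀′}(u) ≤ pers_{𝔗₀}(u) for every vertex u, and moreover in 𝔗₀′ every strict ancestor w of a vertex u satisfies f(w) ≤ f(u). -/

import Mathlib

open scoped Classical

/-- A (multi)graph given by source and target maps on an edge type. -/
structure STGraph (V E : Type*) where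
  src : E → V
  tgt : E → V

namespace STGraph

variable {V E : Type*} (G : STGraph V E)

/-- `e` is an edge joining `x` and `y`. -/
def Ends (e : E) (x y : V) : Prop :=
  (G.src e = x ∧ G.tgt e = y) ∨ (G.src e = y ∧ G.tgt e = x)

/-- The graph is connected. -/
def Connected : Prop :=
  ∀ a b : V, Relation.ReflTransGen (fun x y => ∃ e, G.Ends e x y) a b

/-- Extension of a vertex signal to vertices and edges, `f(e) = max f(V(e))`. -/
def sig (f : V → ℝ) : V ⊕ E → ℝ
  | .inl v => f v
  | .inr e => max (f (G.src e)) (f (G.tgt e))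

/-- `pos` realizes a `G`-ordering: a total ordering of `V ⊕ E` along which the
signal is nondecreasing and every vertex precedes each edge incident to it. -/
def IsGOrdering (f : V → ℝ) (pos : V ⊕ E → ℕ) : Prop :=
  Function.Injective pos ∧
  (∀ a b, pos a ≤ pos b → G.sig f a ≤ G.sig f b) ∧
  (∀ e : E, pos (.inl (G.src e)) < pos (.inr e) ∧ pos (.inl (G.tgt e)) < pos (.inr e))

/-- Connectivity within the subgraph `G_{<k}` of elements with position `< k`. -/
def ConnB (pos : V ⊕ E → ℕ) (k : ℕ) (a b : V) : Prop :=
  pos (.inl a) < k ∧ pos (.inl b) < k ∧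
    Relation.ReflTransGen (fun x y => ∃ e, pos (.inr e) < k ∧ G.Ends e x y) a b

/-- `m` is the `≺`-minimum of the connected component of `v` in `G_{<k}`. -/
def IsCompMin (pos : V ⊕ E → ℕ) (k : ℕ) (m v : V) : Prop :=
  G.ConnB pos k m v ∧ ∀ w, G.ConnB pos k v w → pos (.inl m) ≤ pos (.inl w)

/-- The `≺`-maximal endpoint of an edge. -/
def maxEnd (pos : V ⊕ E → ℕ) (e : E) : V :=
  if pos (.inl (G.src e)) ≤ pos (.inl (G.tgt e)) then G.tgt e else G.src e

/-- `(p, L)` is a basin hierarchy tree of the signal `(G, f)` with respect to the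
`G`-ordering `pos`, rooted at the `≺`-minimal vertex `r`, with linking-vertex map `L`. -/
structure IsBHT (f : V → ℝ) (pos : V ⊕ E → ℕ) (r : V) (p : V → V) (L : V → V) : Prop where
  ordering : G.IsGOrdering f pos
  root_min : ∀ v, pos (.inl r) ≤ pos (.inl v)
  root_fix : p r = r
  reaches : ∀ v, ∃ n, p^[n] v = r
  spec : ∀ v, v ≠ r → ∃ e : E,
    G.IsCompMin pos (pos (.inr e)) v v ∧
    G.IsCompMin pos (pos (.inr e) + 1) (p v) v ∧
    L v = G.maxEnd pos e

end STGraph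

/-- `u` is an ancestor of `v` in the tree with parent map `p` (`u ⪯_T v`). -/
def Anc {V : Type*} (p : V → V) (u v : V) : Prop := ∃ n, p^[n] v = u

/-- `f(𝔏(v))`, with value `+∞` at the root. -/
noncomputable def fLink {V : Type*} (f : V → ℝ) (r : V) (L : V → V) (v : V) : EReal :=
  if v = r then ⊤ else (f (L v) : EReal)

/-- The persistence `pers(v) = f(𝔏(v)) - f(v)` of a vertex in a BHT. -/
noncomputable def persBHT {V : Type*} (f : V → ℝ) (r : V) (L : V → V) (v : V) : EReal :=
  fLink f r L v - (f v : EReal)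

namespace STGraph

variable {V E : Type*} (G : STGraph V E)

/-- The component of `v` dies at the edge `e`: `v` is the minimum of its component
just before `e` is added, and no longer after. -/
def DiesAt (pos : V ⊕ E → ℕ) (v : V) (e : E) : Prop :=
  G.IsCompMin pos (pos (.inr e)) v v ∧ ¬ G.IsCompMin pos (pos (.inr e) + 1) v v

/-- The death value of the component created by `v` (`+∞` if permanent). -/
noncomputable def deathVal (f : V → ℝ) (pos : V ⊕ E → ℕ) (v : V) : EReal :=
  if h : ∃ e, G.DiesAt pos v e then ((G.sig f (.inr h.choose) : ℝ) : EReal) else ⊤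

/-- The degree-0 persistence diagram of `(G, f)`, as a multiset of intervals
`[birth, death)` (including trivial intervals). -/
noncomputable def PD0 [Fintype V] (f : V → ℝ) (pos : V ⊕ E → ℕ) : Multiset (EReal × EReal) :=
  Finset.univ.val.map fun v : V => ((f v : EReal), G.deathVal f pos v)

end STGraph

/-- The nontrivial part of a multiset of intervals. -/
noncomputable def nontriv (M : Multiset (EReal × EReal)) : Multiset (EReal × EReal) :=
  M.filter fun ab => ab.1 < ab.2

/-- The 0-low-persistence filter associated to a BHT `(p, L)` rooted at `r`. -/
noncomputable def LPF {V : Type*} [Fintype V] (f : V → ℝ) (r : V) (p L : V → V)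
    (ε : ℝ) (v : V) : ℝ :=
  (insert (f v) ((Finset.univ.filter fun u => Anc p u v ∧ persBHT f r L u < (ε : EReal)).image
    fun u => f (L u))).max' (Finset.insert_nonempty _ _)


section Aux

open Sum

variable {V E : Type*} {G : STGraph V E} {pos : V ⊕ E → ℕ}

lemma sig_inl (G : STGraph V E) (f : V → ℝ) (v : V) : G.sig f (Sum.inl v) = f v := rfl

lemma sig_inr (G : STGraph V E) (f : V → ℝ) (e : E) :
    G.sig f (Sum.inr e) = max (f (G.src e)) (f (G.tgt e)) := rfl

lemma ends_symm {e : E} {x y : V} (h : G.Ends e x y) : G.Ends e y x := h.symm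

lemma endpoint_pos_lt {h : V → ℝ} (ho : G.IsGOrdering h pos) {e : E} {x y : V}
    (hxy : G.Ends e x y) : pos (inl x) < pos (inr e) := by
  rcases hxy with ⟨h1, _⟩ | ⟨_, h2⟩
  · exact h1 ▸ (ho.2.2 e).1
  · exact h2 ▸ (ho.2.2 e).2

lemma connB_refl {k : ℕ} {a : V} (h : pos (inl a) < k) : G.ConnB pos k a a :=
  ⟨h, h, Relation.ReflTransGen.refl⟩

lemma connB_symm {k : ℕ} {a b : V} (h : G.ConnB pos k a b) : G.ConnB pos k b a :=
  ⟨h.2.1, h.1,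
    (@Relation.ReflTransGen.symmetric _ _ ⟨(fun x y hxy => by
      obtain ⟨e, hk, he⟩ := hxy; exact ⟨e, hk, he.symm⟩)⟩).symm _ _ h.2.2⟩

lemma connB_trans {k : ℕ} {a b c : V} (h1 : G.ConnB pos k a b) (h2 : G.ConnB pos k b c) :
    G.ConnB pos k a c :=
  ⟨h1.1, h2.2.1, h1.2.2.trans h2.2.2⟩

lemma connB_mono {k k' : ℕ} {a b : V} (hk : k ≤ k') (h : G.ConnB pos k a b) :
    G.ConnB pos k' a b :=
  ⟨lt_of_lt_of_le h.1 hk, lt_of_lt_of_le h.2.1 hk,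
    Relation.ReflTransGen.mono (fun x y hxy => by
      obtain ⟨e, he, hE⟩ := hxy; exact ⟨e, lt_of_lt_of_le he hk, hE⟩) _ _ h.2.2⟩

lemma isCompMin_congr {k : ℕ} {m a b : V} (h : G.IsCompMin pos k m a)
    (hab : G.ConnB pos k a b) : G.IsCompMin pos k m b :=
  ⟨connB_trans h.1 hab, fun w hw => h.2 w (connB_trans hab hw)⟩

lemma sig_maxEnd {h : V → ℝ} (ho : G.IsGOrdering h pos) (e : E) :
    h (G.maxEnd pos e) = G.sig h (inr e) := by
  unfold STGraph.maxEnd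
  have hs : ∀ a b : V, pos (inl a) ≤ pos (inl b) → h a ≤ h b := fun a b hab => ho.2.1 _ _ hab
  rw [sig_inr]
  split_ifs with hif
  · exact (max_eq_right (hs _ _ hif)).symm
  · exact (max_eq_left (hs _ _ (le_of_not_ge hif))).symm

lemma anc_refl (p : V → V) (v : V) : Anc p v v := ⟨0, rfl⟩

lemma anc_step (p : V → V) (v : V) : Anc p (p v) v := ⟨1, rfl⟩

lemma anc_trans {p : V → V} {u v w : V} (h1 : Anc p u v) (h2 : Anc p w u) : Anc p w v := by
  obtain ⟨n, hn⟩ := h1; obtain ⟨m, hm⟩ := h2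
  exact ⟨m + n, by rw [Function.iterate_add_apply, hn, hm]⟩

lemma parent_ne {h : V → ℝ} {r : V} {p L : V → V} (hb : G.IsBHT h pos r p L) {v : V}
    (hv : v ≠ r) : p v ≠ v := by
  intro hh
  obtain ⟨n, hn⟩ := hb.reaches v
  rw [Function.iterate_fixed hh n] at hn
  exact hv hn

lemma pos_parent_lt {h : V → ℝ} {r : V} {p L : V → V} (hb : G.IsBHT h pos r p L) {v : V}
    (hv : v ≠ r) : pos (inl (p v)) < pos (inl v) := by
  obtain ⟨e, hA, hB, -⟩ := hb.spec v hv
  have h1 : pos (inl (p v)) ≤ pos (inl v) := hB.2 v (connB_refl hB.1.2.1)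
  refine lt_of_le_of_ne h1 (fun hh => ?_)
  exact parent_ne hb hv (Sum.inl.inj (hb.ordering.1 hh))

lemma ancMin {h : V → ℝ} {r : V} {p L : V → V} (hb : G.IsBHT h pos r p L) :
    ∀ (n : ℕ) (a m : V) (k : ℕ), pos (inl a) < n → G.IsCompMin pos k m a → Anc p m a := by
  intro n
  induction n with
  | zero => intro a m k hlt; omega
  | succ n IH =>
    intro a m k hlt hmin
    by_cases hma : m = a
    · exact hma ▸ anc_refl p a
    have hak : pos (inl a) < k := hmin.1.2.1
    have hma' : pos (inl m) ≤ pos (inl a) := hmin.2 a (connB_refl hak)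
    have hmlt : pos (inl m) < pos (inl a) :=
      lt_of_le_of_ne hma' (fun hh => hma (Sum.inl.inj (hb.ordering.1 hh)))
    have har : a ≠ r := by
      intro hr; subst hr
      exact absurd (hb.root_min m) (not_le.mpr hmlt)
    obtain ⟨e, hA, hB, -⟩ := hb.spec a har
    have hk1 : pos (inr e) + 1 ≤ k := by
      by_contra hcon
      have hkk : k ≤ pos (inr e) := by omega
      have := hA.2 m (connB_mono hkk (connB_symm hmin.1))
      omega
    have hpa : G.ConnB pos k a (p a) := connB_mono hk1 (connB_symm hB.1)
    have hmin' : G.IsCompMin pos k m (p a) := isCompMin_congr hmin hpa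
    have hppos : pos (inl (p a)) < pos (inl a) := pos_parent_lt hb har
    exact anc_trans (anc_step p a) (IH (p a) m k (by omega) hmin')

lemma transfer {h : V → ℝ} (ho : G.IsGOrdering h pos) {g : V → ℝ} {k : ℕ} {c : ℝ} {b : V}
    (hbk : pos (inl b) < k) (H : ∀ a : V, G.ConnB pos k b a → g a ≤ c) :
    ∀ x, Relation.ReflTransGen (fun x y => ∃ e, pos (inr e) < k ∧ G.Ends e x y) b x →
      Relation.ReflTransGen (fun x y => ∃ e, G.Ends e x y ∧ G.sig g (inr e) ≤ c) b x := by
  intro x hx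
  induction hx with
  | refl => exact Relation.ReflTransGen.refl
  | @tail x y hbx hstep IH =>
    obtain ⟨e, hek, he⟩ := hstep
    have hconx : G.ConnB pos k b x := ⟨hbk, lt_trans (endpoint_pos_lt ho he) hek, hbx⟩
    have hcony : G.ConnB pos k b y :=
      ⟨hbk, lt_trans (endpoint_pos_lt ho (ends_symm he)) hek,
        hbx.tail ⟨e, hek, he⟩⟩
    have hsig : G.sig g (inr e) ≤ c := by
      rw [sig_inr]
      rcases he with ⟨h1, h2⟩ | ⟨h1, h2⟩
      · rw [h1, h2]; exact max_le (H _ hconx) (H _ hcony)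
      · rw [h1, h2]; exact max_le (H _ hcony) (H _ hconx)
    exact IH.tail ⟨e, he, hsig⟩

lemma newedge (hinj : Function.Injective pos) {e' : E} {k : ℕ} (hk : pos (inr e') = k) {b : V} :
    ∀ x, Relation.ReflTransGen (fun x y => ∃ e, pos (inr e) < k + 1 ∧ G.Ends e x y) b x →
      Relation.ReflTransGen (fun x y => ∃ e, pos (inr e) < k ∧ G.Ends e x y) b x ∨
      ∃ z, (z = G.src e' ∨ z = G.tgt e') ∧
        Relation.ReflTransGen (fun x y => ∃ e, pos (inr e) < k ∧ G.Ends e x y) b z := by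
  intro x hx
  induction hx with
  | refl => exact Or.inl Relation.ReflTransGen.refl
  | @tail x y hbx hstep IH =>
    rcases IH with IH | IH
    · obtain ⟨e, hek, he⟩ := hstep
      by_cases hlt : pos (inr e) < k
      · exact Or.inl (IH.tail ⟨e, hlt, he⟩)
      · have hee : e = e' := by
          have h1 : pos (inr e) = k := by omega
          exact Sum.inr.inj (hinj (h1.trans hk.symm))
        subst hee
        rcases he with ⟨h1, _⟩ | ⟨_, h2⟩
        · exact Or.inr ⟨x, Or.inl h1.symm, IH⟩
        · exact Or.inr ⟨x, Or.inr h2.symm, IH⟩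
    · exact Or.inr IH

end Aux

section LPFAux

variable {V : Type*} [Fintype V]

lemma pers_root_top (h : V → ℝ) (r : V) (L : V → V) : persBHT h r L r = ⊤ := by
  unfold persBHT fLink
  rw [if_pos rfl]
  exact EReal.top_sub_coe _

lemma persBHT_ne_root (f : V → ℝ) (r : V) (L : V → V) {v : V} (hv : v ≠ r) :
    persBHT f r L v = ((f (L v) - f v : ℝ) : EReal) := by
  unfold persBHT fLink
  rw [if_neg hv, EReal.coe_sub]

lemma g_le_f (f : V → ℝ) (r₁ : V) (p₁ L₁ : V → V) (ε : ℝ)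
    (g : V → ℝ) (hg : g = fun v => -(LPF (-f) r₁ p₁ L₁ ε v)) (v : V) : g v ≤ f v := by
  rw [hg]
  simp only
  rw [neg_le]
  have : (-f) v ≤ LPF (-f) r₁ p₁ L₁ ε v :=
    Finset.le_max' _ _ (Finset.mem_insert_self _ _)
  simpa using this

lemma g_bound (f : V → ℝ) (r₁ : V) (p₁ L₁ : V → V) (ε : ℝ)
    (g : V → ℝ) (hg : g = fun v => -(LPF (-f) r₁ p₁ L₁ ε v)) (v u' : V)
    (hanc : Anc p₁ u' v) (hpers : persBHT (-f) r₁ L₁ u' < (ε : EReal)) :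
    g v ≤ f (L₁ u') := by
  rw [hg]
  simp only
  rw [neg_le]
  have hmem : (-f) (L₁ u') ∈
      insert ((-f) v) ((Finset.univ.filter fun u => Anc p₁ u v ∧
        persBHT (-f) r₁ L₁ u < (ε : EReal)).image fun u => (-f) (L₁ u)) :=
    Finset.mem_insert_of_mem (Finset.mem_image_of_mem _
      (Finset.mem_filter.mpr ⟨Finset.mem_univ _, hanc, hpers⟩))
  have : (-f) (L₁ u') ≤ LPF (-f) r₁ p₁ L₁ ε v := Finset.le_max' _ _ hmem
  simpa using this

lemma g_attained (f : V → ℝ) (r₁ : V) (p₁ L₁ : V → V) (ε : ℝ)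
    (g : V → ℝ) (hg : g = fun v => -(LPF (-f) r₁ p₁ L₁ ε v)) (v : V) :
    ∃ x : V, g v = f x ∧ (x = v ∨ ∃ u', Anc p₁ u' v ∧
      persBHT (-f) r₁ L₁ u' < (ε : EReal) ∧ x = L₁ u') := by
  have hmem := Finset.max'_mem
    (insert ((-f) v) ((Finset.univ.filter fun u => Anc p₁ u v ∧
      persBHT (-f) r₁ L₁ u < (ε : EReal)).image fun u => (-f) (L₁ u)))
    (Finset.insert_nonempty _ _)
  rcases Finset.mem_insert.mp hmem with hh | hh
  · refine ⟨v, ?_, Or.inl rfl⟩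
    rw [hg]; simp only
    rw [show LPF (-f) r₁ p₁ L₁ ε v = (-f) v from hh]
    simp
  · obtain ⟨u', hu', heq⟩ := Finset.mem_image.mp hh
    obtain ⟨-, hanc, hpers⟩ := Finset.mem_filter.mp hu'
    refine ⟨L₁ u', ?_, Or.inr ⟨u', hanc, hpers, rfl⟩⟩
    rw [hg]; simp only
    rw [show LPF (-f) r₁ p₁ L₁ ε v = (-f) (L₁ u') from heq.symm]
    simp

end LPFAux


section PathLemma

open Sum

lemma path_lemma {V E : Type*} [Fintype V] (G : STGraph V E) (f : V → ℝ)
    (pos₁ : V ⊕ E → ℕ) (r₁ : V) (p₁ L₁ : V → V)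
    (hbht₁ : G.IsBHT (-f) pos₁ r₁ p₁ L₁)
    (ε : ℝ) (g : V → ℝ) (hg : g = fun v => -(LPF (-f) r₁ p₁ L₁ ε v))
    (u : V) (hlt : g u < f u) :
    ∃ w : V, f w ≤ g u ∧
      Relation.ReflTransGen (fun x y => ∃ e, G.Ends e x y ∧ G.sig g (Sum.inr e) ≤ g u) u w := by
  obtain ⟨x, hx, hcase⟩ := g_attained f r₁ p₁ L₁ ε g hg u
  rcases hcase with rfl | ⟨u', hanc, hpers, rfl⟩
  · exact absurd hx (ne_of_lt hlt)
  -- hx : g u = f (L₁ u')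
  have hu'r : u' ≠ r₁ := by
    intro hh; subst hh
    rw [pers_root_top] at hpers
    exact not_top_lt hpers
  have HancC : ∀ a, Anc p₁ u' a → g a ≤ g u := fun a ha =>
    (g_bound f r₁ p₁ L₁ ε g hg a u' ha hpers).trans (le_of_eq hx.symm)
  have ancMin' : ∀ (a m : V) (k : ℕ), G.IsCompMin pos₁ k m a → Anc p₁ m a := fun a m k hh =>
    ancMin hbht₁ (pos₁ (inl a) + 1) a m k (Nat.lt_succ_self _) hh
  -- chain from any descendant of u' up to u'
  have CH : ∀ (j : ℕ) (v : V), p₁^[j] v = u' →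
      Relation.ReflTransGen (fun x y => ∃ e, G.Ends e x y ∧ G.sig g (Sum.inr e) ≤ g u) v u' := by
    intro j
    induction j with
    | zero => intro v hv; exact hv ▸ Relation.ReflTransGen.refl
    | succ j IH =>
      intro v hv
      rw [Function.iterate_succ_apply] at hv
      have hvr : v ≠ r₁ := by
        intro hh; subst hh
        rw [hbht₁.root_fix, Function.iterate_fixed hbht₁.root_fix] at hv
        exact hu'r hv.symm
      obtain ⟨e, hA, hB, -⟩ := hbht₁.spec v hvr
      have hanc_pv : Anc p₁ u' (p₁ v) := ⟨j, hv⟩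
      have H : ∀ a, G.ConnB pos₁ (pos₁ (inr e) + 1) (p₁ v) a → g a ≤ g u := by
        intro a ha
        have h1 : G.IsCompMin pos₁ (pos₁ (inr e) + 1) (p₁ v) a :=
          isCompMin_congr hB (connB_trans (connB_symm hB.1) ha)
        exact HancC a (anc_trans (ancMin' a (p₁ v) _ h1) hanc_pv)
      have hpath1 := transfer hbht₁.ordering hB.1.1 H v hB.1.2.2
      have hsym : Relation.ReflTransGen
          (fun x y => ∃ e, G.Ends e x y ∧ G.sig g (Sum.inr e) ≤ g u) v (p₁ v) :=
        (@Relation.ReflTransGen.symmetric _ _ ⟨(fun x y hxy => by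
          obtain ⟨e2, he2, hs⟩ := hxy; exact ⟨e2, he2.symm, hs⟩)⟩).symm _ _ hpath1
      exact hsym.trans (IH (p₁ v) hv)
  -- final leg from u' to the linking vertex
  obtain ⟨e', hA, hB, hL⟩ := hbht₁.spec u' hu'r
  have hu'k : pos₁ (inl u') < pos₁ (inr e') := hA.1.2.1
  have hppos : pos₁ (inl (p₁ u')) < pos₁ (inl u') := pos_parent_lt hbht₁ hu'r
  have hnot : ¬ Relation.ReflTransGen
      (fun x y => ∃ e, pos₁ (inr e) < pos₁ (inr e') ∧ G.Ends e x y) u' (p₁ u') := fun hh =>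
    absurd (hA.2 (p₁ u') ⟨hu'k, lt_trans hppos hu'k, hh⟩) (not_le.mpr hppos)
  have hfull : Relation.ReflTransGen
      (fun x y => ∃ e, pos₁ (inr e) < pos₁ (inr e') + 1 ∧ G.Ends e x y) u' (p₁ u') :=
    (connB_symm hB.1).2.2
  rcases newedge hbht₁.ordering.1 rfl (p₁ u') hfull with hh | ⟨z, hz, hzpath⟩
  · exact absurd hh hnot
  have hzk : pos₁ (inl z) < pos₁ (inr e') := by
    rcases hz with hz | hz <;> rw [hz]
    · exact (hbht₁.ordering.2.2 e').1
    · exact (hbht₁.ordering.2.2 e').2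
  have Hu' : ∀ a, G.ConnB pos₁ (pos₁ (inr e')) u' a → g a ≤ g u := fun a ha =>
    HancC a (ancMin' a u' _ (isCompMin_congr hA ha))
  have hgz : Relation.ReflTransGen
      (fun x y => ∃ e, G.Ends e x y ∧ G.sig g (Sum.inr e) ≤ g u) u' z :=
    transfer hbht₁.ordering hu'k Hu' z hzpath
  have hgzle : g z ≤ g u := Hu' z ⟨hu'k, hzk, hzpath⟩
  have hfw : f (L₁ u') = g u := hx.symm
  obtain ⟨j, hj⟩ := hanc
  have hchain := CH j u hj
  have hwend : L₁ u' = G.src e' ∨ L₁ u' = G.tgt e' := by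
    rw [hL]; unfold STGraph.maxEnd; split_ifs
    · exact Or.inr rfl
    · exact Or.inl rfl
  by_cases hzw : z = L₁ u'
  · exact ⟨L₁ u', le_of_eq hfw, hchain.trans (hzw ▸ hgz)⟩
  · have hgw : g (L₁ u') ≤ g u :=
      le_trans (g_le_f f r₁ p₁ L₁ ε g hg (L₁ u')) (le_of_eq hfw)
    have hends : G.Ends e' z (L₁ u') := by
      rcases hz with hz | hz <;> rcases hwend with hw2 | hw2
      · exact absurd (hz.trans hw2.symm) hzw
      · exact Or.inl ⟨hz.symm, hw2.symm⟩
      · exact Or.inr ⟨hw2.symm, hz.symm⟩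
      · exact absurd (hz.trans hw2.symm) hzw
    have hsig : G.sig g (Sum.inr e') ≤ g u := by
      rw [sig_inr]
      rcases hz with hz | hz <;> rcases hwend with hw2 | hw2
      · exact absurd (hz.trans hw2.symm) hzw
      · rw [← hz, ← hw2]; exact max_le hgzle hgw
      · rw [← hw2, ← hz]; exact max_le hgw hgzle
      · exact absurd (hz.trans hw2.symm) hzw
    exact ⟨L₁ u', le_of_eq hfw, hchain.trans (hgz.tail ⟨e', hends, hsig⟩)⟩

end PathLemma


section Klt

open Sum

variable {V E : Type*} [Fintype V] [Fintype E] (G : STGraph V E) (g f : V → ℝ) (pos₀ : V ⊕ E → ℕ)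

/-- Lexicographic comparison key used to build the ordering for `g`. -/
def klt (a b : V ⊕ E) : Prop :=
  G.sig g a < G.sig g b ∨ (G.sig g a = G.sig g b ∧
    (G.sig f a < G.sig f b ∨ (G.sig f a = G.sig f b ∧ pos₀ a < pos₀ b)))

/-- Rank function realizing `klt` as a position map. -/
noncomputable def kpos (a : V ⊕ E) : ℕ :=
  (Finset.univ.filter (fun b => klt G g f pos₀ b a)).card

variable {G g f pos₀}

lemma klt_trans {a b c : V ⊕ E} (h1 : klt G g f pos₀ a b) (h2 : klt G g f pos₀ b c) :
    klt G g f pos₀ a c := by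
  rcases h1 with h1 | ⟨e1, h1⟩ <;> rcases h2 with h2 | ⟨e2, h2⟩
  · exact Or.inl (h1.trans h2)
  · exact Or.inl (lt_of_lt_of_le h1 (le_of_eq e2))
  · exact Or.inl (lt_of_le_of_lt (le_of_eq e1) h2)
  · refine Or.inr ⟨e1.trans e2, ?_⟩
    rcases h1 with h1 | ⟨f1, h1⟩ <;> rcases h2 with h2 | ⟨f2, h2⟩
    · exact Or.inl (h1.trans h2)
    · exact Or.inl (lt_of_lt_of_le h1 (le_of_eq f2))
    · exact Or.inl (lt_of_le_of_lt (le_of_eq f1) h2)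
    · exact Or.inr ⟨f1.trans f2, h1.trans h2⟩

lemma klt_irrefl (a : V ⊕ E) : ¬ klt G g f pos₀ a a := by
  rintro (h | ⟨-, h | ⟨-, h⟩⟩) <;> exact absurd h (lt_irrefl _)

lemma klt_total (hinj : Function.Injective pos₀) {a b : V ⊕ E} (hab : a ≠ b) :
    klt G g f pos₀ a b ∨ klt G g f pos₀ b a := by
  have hp : pos₀ a ≠ pos₀ b := fun hh => hab (hinj hh)
  rcases lt_trichotomy (G.sig g a) (G.sig g b) with h | h | h
  · exact Or.inl (Or.inl h)
  · rcases lt_trichotomy (G.sig f a) (G.sig f b) with h' | h' | h'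
    · exact Or.inl (Or.inr ⟨h, Or.inl h'⟩)
    · rcases lt_or_gt_of_ne hp with h'' | h''
      · exact Or.inl (Or.inr ⟨h, Or.inr ⟨h', h''⟩⟩)
      · exact Or.inr (Or.inr ⟨h.symm, Or.inr ⟨h'.symm, h''⟩⟩)
    · exact Or.inr (Or.inr ⟨h.symm, Or.inl h'⟩)
  · exact Or.inr (Or.inl h)

lemma kpos_lt {a b : V ⊕ E} (h : klt G g f pos₀ a b) :
    kpos G g f pos₀ a < kpos G g f pos₀ b := by
  have hsub : (Finset.univ.filter (fun c => klt G g f pos₀ c a)) ⊆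
      (Finset.univ.filter (fun c => klt G g f pos₀ c b)) := by
    intro c hc
    rw [Finset.mem_filter] at hc ⊢
    exact ⟨hc.1, klt_trans hc.2 h⟩
  apply Finset.card_lt_card
  rw [Finset.ssubset_iff_of_subset hsub]
  exact ⟨a, Finset.mem_filter.mpr ⟨Finset.mem_univ _, h⟩, fun hc =>
    klt_irrefl a (Finset.mem_filter.mp hc).2⟩

lemma klt_of_kpos_lt (hinj : Function.Injective pos₀) {a b : V ⊕ E}
    (h : kpos G g f pos₀ a < kpos G g f pos₀ b) : klt G g f pos₀ a b := by
  rcases eq_or_ne a b with rfl | hne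
  · exact absurd h (lt_irrefl _)
  rcases klt_total (G := G) (g := g) (f := f) hinj hne with h' | h'
  · exact h'
  · exact absurd (kpos_lt h') (by omega)

lemma kpos_inj (hinj : Function.Injective pos₀) :
    Function.Injective (kpos G g f pos₀) := by
  intro a b h
  by_contra hne
  rcases klt_total (G := G) (g := g) (f := f) hinj hne with h' | h'
  · have := kpos_lt h'; omega
  · have := kpos_lt h'; omega

lemma kpos_sig_mono (hinj : Function.Injective pos₀) {a b : V ⊕ E}
    (h : kpos G g f pos₀ a ≤ kpos G g f pos₀ b) : G.sig g a ≤ G.sig g b := by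
  rcases eq_or_ne a b with rfl | hne
  · exact le_refl _
  rcases klt_total (G := G) (g := g) (f := f) hinj hne with h' | h'
  · rcases h' with h' | ⟨h', -⟩
    · exact le_of_lt h'
    · exact le_of_eq h'
  · exact absurd (kpos_lt h') (by omega)

end Klt

/-- Monotonicity of 0-dimensional persistence under the dual low-persistence
filter: if `𝔗₀` is a BHT of `(G, f)` and `𝔗₁` a BHT of `(G, −f)`, and
`g = −𝓛₀^ε(−f)` is computed via `𝔗₁`, then there exists a `(G, g)`-ordering and a
BHT `𝔗₀′` of `(G, g)` such that `pers_{𝔗₀′}(u) ≤ pers_{𝔗₀}(u)` for every vertex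
`u`, and in `𝔗₀′` every strict ancestor `w` of a vertex `u` satisfies
`f(w) ≤ f(u)`. -/
theorem dual_lpf_pers_monotone {V E : Type*} [Fintype V] [Fintype E]
    (G : STGraph V E) (hG : G.Connected) (f : V → ℝ)
    (pos₀ : V ⊕ E → ℕ) (r₀ : V) (p₀ L₀ : V → V)
    (hbht₀ : G.IsBHT f pos₀ r₀ p₀ L₀)
    (pos₁ : V ⊕ E → ℕ) (r₁ : V) (p₁ L₁ : V → V)
    (hbht₁ : G.IsBHT (-f) pos₁ r₁ p₁ L₁)
    (ε : ℝ) (hε : 0 < ε)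
    (g : V → ℝ) (hg : g = fun v => -(LPF (-f) r₁ p₁ L₁ ε v)) :
    ∃ (pos' : V ⊕ E → ℕ) (r' : V) (p' L' : V → V),
      G.IsBHT g pos' r' p' L' ∧
      (∀ u : V, persBHT g r' L' u ≤ persBHT f r₀ L₀ u) ∧
      (∀ u w : V, Anc p' w u → w ≠ u → f w ≤ f u) := by
  classical
  have hinj₀ : Function.Injective pos₀ := hbht₀.ordering.1
  have hgle : ∀ v, g v ≤ f v := g_le_f f r₁ p₁ L₁ ε g hg
  have hfmono : ∀ a b : V, pos₀ (Sum.inl a) ≤ pos₀ (Sum.inl b) → f a ≤ f b := fun a b h => by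
    have := hbht₀.ordering.2.1 (Sum.inl a) (Sum.inl b) h
    rwa [sig_inl, sig_inl] at this
  have hgmin : ∀ v, f r₀ ≤ g v := by
    intro v
    obtain ⟨x, hx, -⟩ := g_attained f r₁ p₁ L₁ ε g hg v
    rw [hx]
    exact hfmono _ _ (hbht₀.root_min x)
  set pos' : V ⊕ E → ℕ := kpos G g f pos₀ with hpos'
  have posLt : ∀ a b, klt G g f pos₀ a b → pos' a < pos' b := fun a b h => kpos_lt h
  have kltOfPos : ∀ a b, pos' a < pos' b → klt G g f pos₀ a b := fun a b h =>
    klt_of_kpos_lt hinj₀ h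
  have posInj : Function.Injective pos' := kpos_inj hinj₀
  have sigMono : ∀ a b, pos' a ≤ pos' b → G.sig g a ≤ G.sig g b := fun a b h =>
    kpos_sig_mono hinj₀ h
  have hsig_le : ∀ a, G.sig g a ≤ G.sig f a := by
    intro a
    cases a with
    | inl v => exact hgle v
    | inr e => rw [sig_inr, sig_inr]; exact max_le_max (hgle _) (hgle _)
  have hord' : G.IsGOrdering g pos' := by
    refine ⟨posInj, sigMono, fun e => ⟨?_, ?_⟩⟩
    · apply posLt
      have h1 : G.sig g (Sum.inl (G.src e)) ≤ G.sig g (Sum.inr e) := by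
        rw [sig_inl, sig_inr]; exact le_max_left _ _
      have h2 : G.sig f (Sum.inl (G.src e)) ≤ G.sig f (Sum.inr e) := by
        rw [sig_inl, sig_inr]; exact le_max_left _ _
      rcases lt_or_eq_of_le h1 with h | h
      · exact Or.inl h
      · rcases lt_or_eq_of_le h2 with h' | h'
        · exact Or.inr ⟨h, Or.inl h'⟩
        · exact Or.inr ⟨h, Or.inr ⟨h', (hbht₀.ordering.2.2 e).1⟩⟩
    · apply posLt
      have h1 : G.sig g (Sum.inl (G.tgt e)) ≤ G.sig g (Sum.inr e) := by
        rw [sig_inl, sig_inr]; exact le_max_right _ _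
      have h2 : G.sig f (Sum.inl (G.tgt e)) ≤ G.sig f (Sum.inr e) := by
        rw [sig_inl, sig_inr]; exact le_max_right _ _
      rcases lt_or_eq_of_le h1 with h | h
      · exact Or.inl h
      · rcases lt_or_eq_of_le h2 with h' | h'
        · exact Or.inr ⟨h, Or.inl h'⟩
        · exact Or.inr ⟨h, Or.inr ⟨h', (hbht₀.ordering.2.2 e).2⟩⟩
  have hroot : ∀ v : V, pos' (Sum.inl r₀) ≤ pos' (Sum.inl v) := by
    intro v
    rcases eq_or_ne v r₀ with rfl | hv
    · exact le_refl _
    apply le_of_lt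
    apply posLt
    have h1 : G.sig g (Sum.inl r₀) ≤ G.sig g (Sum.inl v) := (hgle r₀).trans (hgmin v)
    have h2 : G.sig f (Sum.inl r₀) ≤ G.sig f (Sum.inl v) := hfmono _ _ (hbht₀.root_min v)
    have h3 : pos₀ (Sum.inl r₀) < pos₀ (Sum.inl v) :=
      lt_of_le_of_ne (hbht₀.root_min v) (fun hh => hv (Sum.inl.inj (hinj₀ hh)).symm)
    rcases lt_or_eq_of_le h1 with h | h
    · exact Or.inl h
    · rcases lt_or_eq_of_le h2 with h' | h'
      · exact Or.inr ⟨h, Or.inl h'⟩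
      · exact Or.inr ⟨h, Or.inr ⟨h', h3⟩⟩
  -- construction of the killing edge and the parent for each non-root vertex
  have main : ∀ v : V, v ≠ r₀ → ∃ em : E × V,
      pos' (Sum.inl em.2) < pos' (Sum.inl v) ∧
      G.IsCompMin pos' (pos' (Sum.inr em.1)) v v ∧
      G.IsCompMin pos' (pos' (Sum.inr em.1) + 1) em.2 v ∧
      ∀ (D : ℝ) (m' : V), pos' (Sum.inl m') < pos' (Sum.inl v) →
        Relation.ReflTransGen (fun x y => ∃ e2, G.Ends e2 x y ∧ G.sig g (Sum.inr e2) ≤ D) v m' →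
        G.sig g (Sum.inr em.1) ≤ D := by
    intro v hv
    set N : ℕ := (Finset.univ.sup pos') + 1 with hNdef
    have hNa : ∀ a : V ⊕ E, pos' a < N :=
      fun a => Nat.lt_succ_of_le (Finset.le_sup (Finset.mem_univ a))
    have hconn : G.ConnB pos' N v r₀ :=
      ⟨hNa _, hNa _, Relation.ReflTransGen.mono (fun x y hxy => by
        obtain ⟨e, he⟩ := hxy; exact ⟨e, hNa _, he⟩) _ _ (hG v r₀)⟩
    have hnotmin : ¬ G.IsCompMin pos' N v v := by
      intro hmin
      exact hv (Sum.inl.inj (posInj (le_antisymm (hmin.2 r₀ hconn) (hroot v))))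
    have hex : ∃ k, pos' (Sum.inl v) < k ∧ ¬ G.IsCompMin pos' k v v := ⟨N, hNa _, hnotmin⟩
    obtain ⟨hk₀pos, hk₀not⟩ := Nat.find_spec hex
    set k₀ := Nat.find hex with hk₀def
    have hmink : ∀ k, k < k₀ → pos' (Sum.inl v) < k → G.IsCompMin pos' k v v := by
      intro k hk hkp
      by_contra hcon
      exact Nat.find_min hex hk ⟨hkp, hcon⟩
    have hsingle : G.IsCompMin pos' (pos' (Sum.inl v) + 1) v v := by
      refine ⟨connB_refl (Nat.lt_succ_self _), ?_⟩
      intro w hw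
      have hone : ∀ x, Relation.ReflTransGen
          (fun x y => ∃ e, pos' (Sum.inr e) < pos' (Sum.inl v) + 1 ∧ G.Ends e x y) v x →
          x = v := by
        intro x hx
        induction hx with
        | refl => rfl
        | @tail x y hbx hstep IH =>
          obtain ⟨e, hek, he⟩ := hstep
          rw [IH] at he
          have := endpoint_pos_lt hord' he
          omega
      rw [hone w hw.2.2]
    have hk2 : pos' (Sum.inl v) + 2 ≤ k₀ := by
      have h2 : k₀ ≠ pos' (Sum.inl v) + 1 := fun hh => hk₀not (hh ▸ hsingle)
      omega
    have cm1 : G.IsCompMin pos' (k₀ - 1) v v := hmink _ (by omega) (by omega)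
    have hedge : ∃ e : E, pos' (Sum.inr e) = k₀ - 1 := by
      by_contra hno
      push_neg at hno
      apply hk₀not
      refine ⟨connB_refl (by omega), ?_⟩
      intro w hw
      have hred : ∀ x, Relation.ReflTransGen
          (fun x y => ∃ e, pos' (Sum.inr e) < k₀ ∧ G.Ends e x y) v x →
          Relation.ReflTransGen
            (fun x y => ∃ e, pos' (Sum.inr e) < k₀ - 1 ∧ G.Ends e x y) v x ∧
            (x = v ∨ pos' (Sum.inl x) < k₀ - 1) := by
        intro x hx
        induction hx with
        | refl => exact ⟨Relation.ReflTransGen.refl, Or.inl rfl⟩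
        | @tail x y hbx hstep IH =>
          obtain ⟨e, hek, he⟩ := hstep
          have he1 : pos' (Sum.inr e) < k₀ - 1 := by
            have := hno e
            omega
          refine ⟨IH.1.tail ⟨e, he1, he⟩, Or.inr ?_⟩
          exact lt_trans (endpoint_pos_lt hord' (ends_symm he)) he1
      obtain ⟨hpath, hbound⟩ := hred w hw.2.2
      have hwk : pos' (Sum.inl w) < k₀ - 1 := by
        rcases hbound with rfl | hb
        · omega
        · exact hb
      exact cm1.2 w ⟨by omega, hwk, hpath⟩
    obtain ⟨e, he⟩ := hedge
    have hke : pos' (Sum.inr e) + 1 = k₀ := by omega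
    have hMne : (Finset.univ.filter (fun w : V => G.ConnB pos' k₀ v w)).Nonempty :=
      ⟨v, Finset.mem_filter.mpr ⟨Finset.mem_univ _, connB_refl (by omega)⟩⟩
    obtain ⟨m, hmM, hmmin⟩ := Finset.exists_min_image _ (fun w => pos' (Sum.inl w)) hMne
    have hmconn : G.ConnB pos' k₀ v m := (Finset.mem_filter.mp hmM).2
    have hmin2 : ∀ w, G.ConnB pos' k₀ v w → pos' (Sum.inl m) ≤ pos' (Sum.inl w) := fun w hw =>
      hmmin w (Finset.mem_filter.mpr ⟨Finset.mem_univ _, hw⟩)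
    have hmne : m ≠ v := by
      intro hh; subst hh
      exact hk₀not ⟨connB_refl (by omega), hmin2⟩
    have hmlt : pos' (Sum.inl m) < pos' (Sum.inl v) :=
      lt_of_le_of_ne (hmin2 v (connB_refl (by omega)))
        (fun hh => hmne (Sum.inl.inj (posInj hh)))
    refine ⟨(e, m), hmlt, ?_, ?_, ?_⟩
    · rw [he]; exact cm1
    · rw [hke]
      exact ⟨connB_symm hmconn, hmin2⟩
    · intro D m' hm' hpath
      by_contra hD
      push_neg at hD
      have hstep2 : ∀ x y, (∃ e2, G.Ends e2 x y ∧ G.sig g (Sum.inr e2) ≤ D) →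
          (∃ e2, pos' (Sum.inr e2) < k₀ - 1 ∧ G.Ends e2 x y) := by
        intro x y hxy
        obtain ⟨e2, hE, hle⟩ := hxy
        refine ⟨e2, ?_, hE⟩
        have h1 : G.sig g (Sum.inr e2) < G.sig g (Sum.inr e) := lt_of_le_of_lt hle hD
        have := posLt _ _ (Or.inl h1)
        omega
      have hconn2 : G.ConnB pos' (k₀ - 1) v m' :=
        ⟨by omega, by omega, Relation.ReflTransGen.mono hstep2 _ _ hpath⟩
      exact absurd (cm1.2 m' hconn2) (not_le.mpr hm')
  choose F hF1 hF2 hF3 hF4 using main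
  set pp : V → V := fun v => if h : v = r₀ then r₀ else (F v h).2 with hpp
  set LL : V → V := fun v => if h : v = r₀ then r₀ else G.maxEnd pos' (F v h).1 with hLL
  have hppr : ∀ v (h : v ≠ r₀), pp v = (F v h).2 := by
    intro v h
    simp only [hpp]
    rw [dif_neg h]
  have hLLr : ∀ v (h : v ≠ r₀), LL v = G.maxEnd pos' (F v h).1 := by
    intro v h
    simp only [hLL]
    rw [dif_neg h]
  have hppro : pp r₀ = r₀ := by
    simp only [hpp]
    simp
  have hreach : ∀ n (v : V), pos' (Sum.inl v) < n → ∃ k, pp^[k] v = r₀ := by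
    intro n
    induction n with
    | zero => intro v h; omega
    | succ n IH =>
      intro v hvn
      by_cases hv : v = r₀
      · exact ⟨0, hv⟩
      · have hlt := hF1 v hv
        have hpv : pp v = (F v hv).2 := hppr v hv
        obtain ⟨k, hk⟩ := IH (pp v) (by rw [hpv]; omega)
        exact ⟨k + 1, by rw [Function.iterate_succ_apply, hk]⟩
  have hBHT : G.IsBHT g pos' r₀ pp LL := by
    refine ⟨hord', hroot, hppro, ?_, ?_⟩
    · intro v
      exact hreach (pos' (Sum.inl v) + 1) v (Nat.lt_succ_self _)
    · intro v hv
      refine ⟨(F v hv).1, hF2 v hv, ?_, hLLr v hv⟩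
      rw [hppr v hv]
      exact hF3 v hv
  refine ⟨pos', r₀, pp, LL, hBHT, ?_, ?_⟩
  · -- persistence does not increase
    intro u
    by_cases hu : u = r₀
    · subst hu
      rw [pers_root_top, pers_root_top]
    · obtain ⟨e₀, s1, s2, s3⟩ := hbht₀.spec u hu
      have hgLu : g (LL u) = G.sig g (Sum.inr (F u hu).1) := by
        rw [hLLr u hu]
        exact sig_maxEnd hord' _
      have hfLu : f (L₀ u) = G.sig f (Sum.inr e₀) := by
        rw [s3]
        exact sig_maxEnd hbht₀.ordering _
      rw [persBHT_ne_root g r₀ LL hu, persBHT_ne_root f r₀ L₀ hu, EReal.coe_le_coe_iff,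
        hgLu, hfLu]
      have hue₀ : pos₀ (Sum.inl u) < pos₀ (Sum.inr e₀) := s1.1.2.1
      have hfue₀ : f u ≤ G.sig f (Sum.inr e₀) := by
        have := hbht₀.ordering.2.1 (Sum.inl u) (Sum.inr e₀) (le_of_lt hue₀)
        rwa [sig_inl] at this
      rcases lt_or_eq_of_le (hgle u) with hgu | hgu
      · -- g u < f u : the filter flattened u; its class dies immediately
        obtain ⟨w, hfw, hpath⟩ := path_lemma G f pos₁ r₁ p₁ L₁ hbht₁ ε g hg u hgu
        have hm' : pos' (Sum.inl w) < pos' (Sum.inl u) := by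
          apply posLt
          rcases lt_or_eq_of_le ((hgle w).trans hfw) with h | h
          · exact Or.inl h
          · have hfwu : f w = g u := le_antisymm hfw (h ▸ hgle w)
            refine Or.inr ⟨by rw [sig_inl, sig_inl]; exact h, Or.inl ?_⟩
            rw [sig_inl, sig_inl, hfwu]
            exact hgu
        have hkill := hF4 u hu (g u) w hm' hpath
        linarith
      · -- g u = f u
        have hpm : pos₀ (Sum.inl (p₀ u)) < pos₀ (Sum.inl u) := pos_parent_lt hbht₀ hu
        have hfm : f (p₀ u) ≤ f u := hfmono _ _ (le_of_lt hpm)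
        have hm' : pos' (Sum.inl (p₀ u)) < pos' (Sum.inl u) := by
          apply posLt
          have hgpu : g (p₀ u) ≤ g u := by rw [hgu]; exact (hgle _).trans hfm
          rcases lt_or_eq_of_le hgpu with h | h
          · exact Or.inl h
          · have hfpu : f (p₀ u) = f u := le_antisymm hfm (by rw [← hgu, ← h]; exact hgle _)
            refine Or.inr ⟨by rw [sig_inl, sig_inl]; exact h, Or.inr ⟨?_, hpm⟩⟩
            rw [sig_inl, sig_inl]
            exact hfpu
        have hpathA : Relation.ReflTransGen
            (fun x y => ∃ e2, G.Ends e2 x y ∧ G.sig g (Sum.inr e2) ≤ G.sig f (Sum.inr e₀))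
            u (p₀ u) := by
          refine Relation.ReflTransGen.mono ?_ _ _ ((connB_symm s2.1).2.2)
          intro x y hxy
          obtain ⟨e2, he2, hE⟩ := hxy
          refine ⟨e2, hE, ?_⟩
          exact (hsig_le _).trans (hbht₀.ordering.2.1 (Sum.inr e2) (Sum.inr e₀) (by omega))
        have hkill := hF4 u hu _ (p₀ u) hm' hpathA
        rw [hgu]
        linarith
  · -- strict ancestors have smaller f-value
    have hstepf : ∀ y, f (pp y) ≤ f y := by
      intro y
      by_cases hy : y = r₀
      · subst hy
        rw [hppro]
      · rw [hppr y hy]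
        have hklt := kltOfPos _ _ (hF1 y hy)
        rcases hklt with hklt | ⟨hgeq, hrest⟩
        · have hgqy : g ((F y hy).2) < g y := by rwa [sig_inl, sig_inl] at hklt
          rcases lt_or_eq_of_le (hgle ((F y hy).2)) with hfq | hfq
          · exfalso
            obtain ⟨w, hfw, hpath⟩ :=
              path_lemma G f pos₁ r₁ p₁ L₁ hbht₁ ε g hg ((F y hy).2) hfq
            have hyey : pos' (Sum.inl y) < pos' (Sum.inr (F y hy).1) := (hF2 y hy).1.2.1
            have hgyle : g y ≤ G.sig g (Sum.inr (F y hy).1) := by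
              have := sigMono _ _ (le_of_lt hyey)
              rwa [sig_inl] at this
            have hcq : G.ConnB pos' (pos' (Sum.inr (F y hy).1) + 1) y ((F y hy).2) :=
              connB_symm (hF3 y hy).1
            have hpath2 : Relation.ReflTransGen
                (fun a b => ∃ e2, pos' (Sum.inr e2) < pos' (Sum.inr (F y hy).1) + 1 ∧
                  G.Ends e2 a b) ((F y hy).2) w := by
              refine Relation.ReflTransGen.mono ?_ _ _ hpath
              intro a b hab
              obtain ⟨e2, hE, hle⟩ := hab
              refine ⟨e2, ?_, hE⟩
              have h1 : G.sig g (Sum.inr e2) < G.sig g (Sum.inr (F y hy).1) :=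
                lt_of_lt_of_le (lt_of_le_of_lt hle hgqy) hgyle
              have := posLt _ _ (Or.inl h1)
              omega
            have hwk : pos' (Sum.inl w) < pos' (Sum.inr (F y hy).1) + 1 := by
              have h1 : G.sig g (Sum.inl w) < G.sig g (Sum.inr (F y hy).1) := by
                rw [sig_inl]
                exact lt_of_lt_of_le (lt_of_le_of_lt ((hgle w).trans hfw) hgqy) hgyle
              have := posLt _ _ (Or.inl h1)
              omega
            have hconw : G.ConnB pos' (pos' (Sum.inr (F y hy).1) + 1) y w :=
              connB_trans hcq ⟨hcq.2.1, hwk, hpath2⟩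
            have hminw := (hF3 y hy).2 w hconw
            have hwq : klt G g f pos₀ (Sum.inl w) (Sum.inl ((F y hy).2)) := by
              rcases lt_or_eq_of_le ((hgle w).trans hfw) with h | h
              · exact Or.inl h
              · have hfwq : f w = g ((F y hy).2) := le_antisymm hfw (h ▸ hgle w)
                refine Or.inr ⟨by rw [sig_inl, sig_inl]; exact h, Or.inl ?_⟩
                rw [sig_inl, sig_inl, hfwq]
                exact hfq
            exact absurd hminw (not_le.mpr (posLt _ _ hwq))
          · rw [← hfq]
            exact le_of_lt (lt_of_lt_of_le hgqy (hgle y))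
        · rcases hrest with h | ⟨h, -⟩
          · rw [sig_inl, sig_inl] at h; exact le_of_lt h
          · rw [sig_inl, sig_inl] at h; exact le_of_eq h
    intro u w hanc hne
    obtain ⟨n, hn⟩ := hanc
    have hiter : ∀ (n : ℕ) (y : V), f (pp^[n] y) ≤ f y := by
      intro n
      induction n with
      | zero => intro y; exact le_refl _
      | succ n IH =>
        intro y
        rw [Function.iterate_succ_apply]
        exact (IH (pp y)).trans (hstepf y)
    exact hn ▸ hiter n u
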